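/- arXiv:1601.05842 — 5 statements merged into one kernel-verified Lean document; each statement's English description precedes it below -/
import Mathlib

section
/- Define Γ(u,k) = 1 + (1-b)^{-u}[(-b)^{m-k}·C(u-1, m-k) - Σ_{j=0}^{m-k} C(u,j)(-b)^j] for integers b ≥ 2, m ≥ 0, 0 ≤ k ≤ m and u ≥ 1. If b ≥ u and u = m - k + 2L - 1 for some positive integer L, then Γ(u,k) ≥ 1. -/
open Finset

/-- Gain coefficient of a scrambled `(0,m,s)`-net in base `b`. -/
noncomputable def gainCoeff (b m k u : ℕ) : ℝ :=
  1 + ((1 : ℝ) - b) ^ (-(u : ℤ)) *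
    ((-(b : ℝ)) ^ (m - k) * ((u - 1).choose (m - k) : ℝ)
      - ∑ j ∈ range (m - k + 1), ((u.choose j : ℝ) * (-(b : ℝ)) ^ j))

/-- Bounds for an alternating sum of a pointwise-monotone nonneg sequence. -/
lemma alt_sum_bounds (f : ℕ → ℝ) (hf : ∀ i, 0 ≤ f i) :
    ∀ n : ℕ, (∀ i < n, f i ≤ f (i + 1)) →
      0 ≤ ∑ j ∈ range (n + 1), (-1 : ℝ) ^ (n + j) * f j ∧
        ∑ j ∈ range (n + 1), (-1 : ℝ) ^ (n + j) * f j ≤ f n := by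
  intro n
  induction n with
  | zero => intro _; simp [hf 0]
  | succ n ih =>
    intro hmono
    have ihn := ih (fun i hi => hmono i (by omega))
    have hrw : ∑ j ∈ range (n + 1 + 1), (-1 : ℝ) ^ (n + 1 + j) * f j =
        f (n + 1) - ∑ j ∈ range (n + 1), (-1 : ℝ) ^ (n + j) * f j := by
      rw [Finset.sum_range_succ]
      have h1 : (-1 : ℝ) ^ (n + 1 + (n + 1)) = 1 := by
        have : n + 1 + (n + 1) = 2 * (n + 1) := by omega
        rw [this, pow_mul]; norm_num
      rw [h1, one_mul]
      have h2 : ∀ j, (-1 : ℝ) ^ (n + 1 + j) = -((-1 : ℝ) ^ (n + j)) := by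
        intro j
        have : n + 1 + j = (n + j) + 1 := by omega
        rw [this, pow_succ]; ring
      rw [Finset.sum_congr rfl (fun j _ => by rw [h2 j])]
      simp only [neg_mul, Finset.sum_neg_distrib]
      ring
    rw [hrw]
    have hfn := hmono n (by omega)
    constructor
    · linarith [ihn.2]
    · linarith [ihn.1]

/-- If `u = m - k + 2L - 1` for some positive integer `L`, with `b ≥ max(u,2)`,
then the gain coefficient `Γ(u,k)` is at least `1`. -/
theorem gainCoeff_ge_one_of_odd_gap
    (b m k u L : ℕ) (hb2 : 2 ≤ b) (hbu : u ≤ b) (hu : 1 ≤ u) (hk : k ≤ m)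
    (hL : 1 ≤ L) (huL : (u : ℤ) = (m : ℤ) - k + 2 * L - 1) :
    1 ≤ gainCoeff b m k u := by
  set d : ℕ := m - k with hd
  have hud : u + 1 = d + 2 * L := by omega
  have hdu : d + 1 ≤ u := by omega
  set S : ℝ := (-(b : ℝ)) ^ d * ((u - 1).choose d : ℝ)
      - ∑ j ∈ range (d + 1), ((u.choose j : ℝ) * (-(b : ℝ)) ^ j) with hS
  -- reduce to 0 ≤ (-1)^u * S
  have hb1 : (0 : ℝ) < ((b : ℝ) - 1) ^ u := by
    apply pow_pos; have : (2 : ℝ) ≤ (b : ℝ) := by exact_mod_cast hb2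
    linarith
  have hXeq : ((1 : ℝ) - b) ^ (-(u : ℤ)) * S
      = (((b : ℝ) - 1) ^ u)⁻¹ * ((-1 : ℝ) ^ u * S) := by
    rw [zpow_neg, zpow_natCast]
    rw [show (1 : ℝ) - (b : ℝ) = (-1) * ((b : ℝ) - 1) by ring, mul_pow, mul_inv]
    rw [show ((-1 : ℝ) ^ u)⁻¹ = ((-1 : ℝ)⁻¹) ^ u from (inv_pow _ _).symm]
    norm_num; ring
  suffices hkey : 0 ≤ (-1 : ℝ) ^ u * S by
    unfold gainCoeff
    rw [← hd, ← hS, hXeq]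
    nlinarith [mul_nonneg (le_of_lt (inv_pos.2 hb1)) hkey]
  -- key parity rewrite
  have hpar : ∀ j : ℕ, (-1 : ℝ) ^ (u + j) = -(-1 : ℝ) ^ (d + j) := by
    intro j
    have h1 : u + j + 1 = (d + j) + 2 * L := by omega
    have h2 : (-1 : ℝ) ^ (u + j + 1) = (-1 : ℝ) ^ (d + j) := by
      rw [h1, pow_add, pow_mul]; norm_num
    have h3 : (-1 : ℝ) ^ (u + j + 1) = (-1 : ℝ) ^ (u + j) * (-1) := pow_succ _ _
    nlinarith [h2, h3]
  set f : ℕ → ℝ := fun j => (b : ℝ) ^ j * (u.choose j : ℝ) with hfdef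
  have hf0 : ∀ i, 0 ≤ f i := fun i => by positivity
  have hTeq : (-1 : ℝ) ^ u * S
      = (∑ j ∈ range (d + 1), (-1 : ℝ) ^ (d + j) * f j)
        - (b : ℝ) ^ d * (((u - 1).choose d : ℕ) : ℝ) := by
    rw [hS, mul_sub, Finset.mul_sum]
    have hterm : ∀ j ∈ range (d + 1),
        (-1 : ℝ) ^ u * ((u.choose j : ℝ) * (-(b : ℝ)) ^ j)
          = -((-1 : ℝ) ^ (d + j) * f j) := by
      intro j _
      have hnb : (-(b : ℝ)) ^ j = (-1 : ℝ) ^ j * (b : ℝ) ^ j := by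
        rw [← neg_one_mul, mul_pow]
      have hpj : (-1 : ℝ) ^ u * (-1 : ℝ) ^ j = -((-1 : ℝ) ^ d * (-1 : ℝ) ^ j) := by
        have := hpar j; rw [pow_add, pow_add] at this; linarith
      rw [hnb, hfdef, pow_add]
      linear_combination ((u.choose j : ℝ) * (b : ℝ) ^ j) * hpj
    rw [Finset.sum_congr rfl hterm]
    have hhead : (-1 : ℝ) ^ u * ((-(b : ℝ)) ^ d * ((u - 1).choose d : ℝ))
        = -((b : ℝ) ^ d * ((u - 1).choose d : ℝ)) := by
      have h1 : (-(b : ℝ)) ^ d = (-1 : ℝ) ^ d * (b : ℝ) ^ d := by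
        rw [← neg_one_mul, mul_pow]
      have h2 := hpar d
      have h3 : (-1 : ℝ) ^ (d + d) = 1 := by
        rw [show d + d = 2 * d by omega, pow_mul]; norm_num
      have h4 : (-1 : ℝ) ^ u * (-1 : ℝ) ^ d = -1 := by
        rw [pow_add, pow_add] at h2
        rw [pow_add] at h3
        linarith
      rw [h1]
      linear_combination ((b : ℝ) ^ d * ((u - 1).choose d : ℝ)) * h4
    rw [hhead, Finset.sum_neg_distrib]
    ring
  rw [hTeq]
  -- case d = 0
  rcases Nat.eq_zero_or_eq_succ_pred d with hd0 | hd1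
  · rw [hd0]; simp [hfdef]
  -- case d = e + 1
  set e : ℕ := d - 1 with he
  have hde : d = e + 1 := hd1
  have heu : e + 2 ≤ u := by omega
  -- monotonicity of f up to e
  have hmono : ∀ i < e, f i ≤ f (i + 1) := by
    intro i hi
    have hiu : i + 1 < u := by omega
    have hnat : u.choose i ≤ b * u.choose (i + 1) := by
      have hid : u.choose (i + 1) * (i + 1) = u.choose i * (u - i) :=
        Nat.choose_succ_right_eq u i
      have h1u : 1 ≤ u - i := by omega
      calc u.choose i ≤ u.choose i * (u - i) := Nat.le_mul_of_pos_right _ (by omega)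
        _ = u.choose (i + 1) * (i + 1) := hid.symm
        _ ≤ u.choose (i + 1) * b := Nat.mul_le_mul_left _ (by omega)
        _ = b * u.choose (i + 1) := by ring
    have hnatR : (u.choose i : ℝ) ≤ (b : ℝ) * (u.choose (i + 1) : ℝ) := by
      exact_mod_cast hnat
    have hbp : (0 : ℝ) ≤ (b : ℝ) ^ i := by positivity
    calc f i = (b : ℝ) ^ i * (u.choose i : ℝ) := rfl
      _ ≤ (b : ℝ) ^ i * ((b : ℝ) * (u.choose (i + 1) : ℝ)) := by
          exact mul_le_mul_of_nonneg_left hnatR hbp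
      _ = f (i + 1) := by simp only [hfdef]; rw [pow_succ]; ring
  obtain ⟨hA0, hA1⟩ := alt_sum_bounds f hf0 e hmono
  set A : ℝ := ∑ j ∈ range (e + 1), (-1 : ℝ) ^ (e + j) * f j with hA
  -- split the big sum
  have hsplit : ∑ j ∈ range (d + 1), (-1 : ℝ) ^ (d + j) * f j = -A + f d := by
    rw [hde, Finset.sum_range_succ]
    have h1 : (-1 : ℝ) ^ (e + 1 + (e + 1)) = 1 := by
      rw [show e + 1 + (e + 1) = 2 * (e + 1) by omega, pow_mul]; norm_num
    rw [h1, one_mul]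
    have h2 : ∀ j, (-1 : ℝ) ^ (e + 1 + j) = -((-1 : ℝ) ^ (e + j)) := by
      intro j
      rw [show e + 1 + j = (e + j) + 1 by omega, pow_succ]; ring
    rw [Finset.sum_congr rfl (fun j _ => by rw [h2 j])]
    simp only [neg_mul, Finset.sum_neg_distrib]
    rfl
  rw [hsplit]
  -- Pascal: C(u,d) = C(u-1,e) + C(u-1,d)
  have hpascal : u.choose d = (u - 1).choose e + (u - 1).choose d := by
    have : u = (u - 1) + 1 := by omega
    rw [this, hde]
    exact Nat.choose_succ_succ (u - 1) e
  have hpascalR : (u.choose d : ℝ) = ((u - 1).choose e : ℝ) + ((u - 1).choose d : ℝ) := by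
    exact_mod_cast hpascal
  -- b * C(u-1,e) ≥ C(u,e)
  have hbc : u.choose e ≤ b * (u - 1).choose e := by
    have hid : (u - 1).choose e * ((u - 1) + 1) = ((u - 1) + 1).choose e * ((u - 1) + 1 - e) :=
      Nat.choose_mul_succ_eq (u - 1) e
    have hu1 : (u - 1) + 1 = u := by omega
    rw [hu1] at hid
    have hue : 1 ≤ u - e := by omega
    calc u.choose e ≤ u.choose e * (u - e) := Nat.le_mul_of_pos_right _ (by omega)
      _ = (u - 1).choose e * u := hid.symm
      _ ≤ (u - 1).choose e * b := Nat.mul_le_mul_left _ hbu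
      _ = b * (u - 1).choose e := by ring
  have hbcR : (u.choose e : ℝ) ≤ (b : ℝ) * ((u - 1).choose e : ℝ) := by
    exact_mod_cast hbc
  -- final computation
  have hfd : f d = (b : ℝ) ^ d * (u.choose d : ℝ) := rfl
  have hfe : f e = (b : ℝ) ^ e * (u.choose e : ℝ) := rfl
  have hbd : (b : ℝ) ^ d = (b : ℝ) ^ e * (b : ℝ) := by rw [hde, pow_succ]
  have hbe : (0 : ℝ) ≤ (b : ℝ) ^ e := by positivity
  rw [hfd, hpascalR, hbd]
  nlinarith [hA1, hfe, mul_le_mul_of_nonneg_left hbcR hbe]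
end

section
/- Define Γ(u,k) = 1 + (1-b)^{-u}[(-b)^{m-k}·C(u-1, m-k) - Σ_{j=0}^{m-k} C(u,j)(-b)^j]. If b ≥ 2, b ≥ u+2, and u = m - k + 2L for some positive integer L, then Γ(u,k) ≤ Γ(u+2,k). -/
open Finset

lemma sum_rec (x : ℝ) (u : ℕ) : ∀ n : ℕ,
    ∑ j ∈ range (n+1), (((u+1).choose j : ℝ)) * x^j
      = (1+x) * (∑ j ∈ range (n+1), ((u.choose j : ℝ)) * x^j) - (u.choose n : ℝ) * x^(n+1)
  | 0 => by simp
  | (n+1) => by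
    rw [sum_range_succ, sum_range_succ (fun j => ((u.choose j : ℝ)) * x^j) (n+1),
        sum_rec x u n, Nat.choose_succ_succ']
    push_cast
    ring

lemma choose_succ_le (v t : ℕ) (h : t ≤ v) : (v+1).choose t ≤ (t+1) * v.choose t := by
  cases t with
  | zero => simp
  | succ s =>
    have h1 : (v+1).choose (s+1) = v.choose s + v.choose (s+1) := Nat.choose_succ_succ' v s
    have h2 : v.choose s ≤ v.choose (s+1) * (s+1) := by
      rw [Nat.choose_succ_right_eq]
      have hvs : 1 ≤ v - s := by omega
      calc v.choose s = v.choose s * 1 := (mul_one _).symm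
        _ ≤ v.choose s * (v - s) := Nat.mul_le_mul_left _ hvs
    calc (v+1).choose (s+1) = v.choose s + v.choose (s+1) := h1
      _ ≤ v.choose (s+1) * (s+1) + v.choose (s+1) := by omega
      _ = (s+1+1) * v.choose (s+1) := by ring

lemma key_nat (b u n : ℕ) (hn : n + 2 ≤ u) (hb : u + 2 ≤ b) :
    (u+1).choose n + (b-1) * ((u-1).choose n) ≤ b * u.choose n := by
  obtain ⟨v, rfl⟩ : ∃ v, u = v + 1 := ⟨u-1, by omega⟩
  obtain ⟨w, rfl⟩ : ∃ w, b = w + 1 := ⟨b-1, by omega⟩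
  simp only [Nat.add_sub_cancel]
  cases n with
  | zero => simp; omega
  | succ t =>
    have h1 : (v+1+1).choose (t+1) = (v+1).choose t + (v+1).choose (t+1) :=
      Nat.choose_succ_succ' (v+1) t
    have h2 : (v+1).choose (t+1) = v.choose t + v.choose (t+1) := Nat.choose_succ_succ' v t
    have h3 : (v+1).choose t ≤ (t+1) * v.choose t := choose_succ_le v t (by omega)
    have h5 : (v+1).choose t ≤ w * v.choose t :=
      le_trans h3 (Nat.mul_le_mul_right _ (by omega))
    rw [h1, h2]
    nlinarith [h5]

lemma alg_id (x y A c0 c1 c2 : ℝ) (u n : ℕ) (hxy : y * (1+x) = 1) :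
    (1 + y^(u+2) * (x^n * c1 - ((1+x) * ((1+x) * A - c0 * x^(n+1)) - c1 * x^(n+1))))
      - (1 + y^u * (x^n * c2 - A))
    = y^(u+1) * x^n * (c1 + x*c0 - (1+x)*c2) := by
  have e0 : y^u = y^(u+2)*(1+x)^2 := by linear_combination (-(y^u*(y*(1+x)+1))) * hxy
  have e1 : y^(u+1) = y^(u+2)*(1+x) := by linear_combination (-(y^(u+1))) * hxy
  rw [e0, e1]; ring

/-- If `u = m - k + 2L` for some positive integer `L`, with `b ≥ 2` and `b ≥ u + 2`,
then `Γ(u,k) ≤ Γ(u+2,k)`. -/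
theorem gainCoeff_mono_even_gap
    (b m k u L : ℕ) (hb2 : 2 ≤ b) (hbu : u + 2 ≤ b) (hk : k ≤ m)
    (hL : 1 ≤ L) (huL : u = m - k + 2 * L) :
    gainCoeff b m k u ≤ gainCoeff b m k (u + 2) := by
  have hn2 : m - k + 2 ≤ u := by omega
  unfold gainCoeff
  rw [show u + 2 - 1 = u + 1 by omega]
  set n := m - k with hn
  set x : ℝ := -(b:ℝ) with hx
  set y : ℝ := ((1:ℝ) - (b:ℝ))⁻¹ with hy
  have hbR : (2:ℝ) ≤ (b:ℝ) := by exact_mod_cast hb2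
  have hb0 : ((1:ℝ) - (b:ℝ)) ≠ 0 := by intro h; linarith
  have hzp : ∀ v : ℕ, ((1:ℝ) - (b:ℝ)) ^ (-(v:ℤ)) = y ^ v := by
    intro v; rw [hy, zpow_neg, zpow_natCast, inv_pow]
  rw [hzp u, hzp (u+2)]
  set A := ∑ j ∈ range (n+1), ((u.choose j : ℝ)) * x^j with hA
  have hS2 : ∑ j ∈ range (n+1), (((u+2).choose j : ℝ)) * x^j
      = (1+x) * ((1+x) * A - (u.choose n : ℝ) * x^(n+1)) - ((u+1).choose n : ℝ) * x^(n+1) := by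
    rw [show u + 2 = (u+1)+1 from rfl, sum_rec, sum_rec]
  rw [hS2]
  have hxy : y * (1+x) = 1 := by
    rw [hy, hx, show (1:ℝ) + -(b:ℝ) = 1 - (b:ℝ) by ring]
    exact inv_mul_cancel₀ hb0
  set z : ℝ := ((b:ℝ) - 1)⁻¹ with hz
  have hsign : y^(u+1) * x^n = -(z^(u+1) * (b:ℝ)^n) := by
    have hyz : y = -z := by
      rw [hy, hz, show (1:ℝ) - (b:ℝ) = -((b:ℝ)-1) by ring, inv_neg]
    have hodd : ((-1:ℝ))^(u+1) * (-1:ℝ)^n = -1 := by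
      rw [← pow_add]
      exact Odd.neg_one_pow ⟨n+L, by omega⟩
    rw [hyz, hx, neg_pow, neg_pow]
    linear_combination (z^(u+1) * (b:ℝ)^n) * hodd
  have hGR : ((u+1).choose n : ℝ) + ((b:ℝ)-1) * ((u-1).choose n : ℝ)
      ≤ (b:ℝ) * (u.choose n : ℝ) := by
    have h := key_nat b u n hn2 hbu
    have h' := (Nat.cast_le (α := ℝ)).mpr h
    push_cast [Nat.cast_sub (show 1 ≤ b by omega)] at h'
    linarith [h']
  have hd := alg_id x y A ((u.choose n : ℝ)) (((u+1).choose n : ℝ)) (((u-1).choose n : ℝ))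
    u n hxy
  have hpos : 0 ≤ y^(u+1) * x^n *
      (((u+1).choose n : ℝ) + x*(u.choose n : ℝ) - (1+x)*((u-1).choose n : ℝ)) := by
    rw [hsign, hx]
    have hz0 : (0:ℝ) ≤ z := by rw [hz]; exact inv_nonneg.mpr (by linarith)
    have hfact : -(z^(u+1) * (b:ℝ)^n) *
        (((u+1).choose n : ℝ) + -(b:ℝ)*(u.choose n : ℝ) - (1+ -(b:ℝ))*((u-1).choose n : ℝ))
        = z^(u+1) * (b:ℝ)^n *
          ((b:ℝ)*(u.choose n : ℝ) - ((u+1).choose n : ℝ) - ((b:ℝ)-1)*((u-1).choose n : ℝ)) := by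
      ring
    rw [hfact]
    have hG0 : (0:ℝ) ≤ (b:ℝ)*(u.choose n : ℝ) - ((u+1).choose n : ℝ)
        - ((b:ℝ)-1)*((u-1).choose n : ℝ) := by linarith
    exact mul_nonneg (mul_nonneg (pow_nonneg hz0 _) (pow_nonneg (by linarith) _)) hG0
  linarith [hd, hpos]
end

section
/- The unique bounded solution h_t of Stein's equation satisfies 0 ≤ h_t(w) ≤ 1 for all w ∈ ℝ and every t ∈ ℝ, where h_t(w) = Φ(w)(1-Φ(t))/φ(w) for w ≤ t and h_t(w) = Φ(t)(1-Φ(w))/φ(w) for w > t. -/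
open Real MeasureTheory

/-- Standard normal density. -/
noncomputable def normalPDF (w : ℝ) : ℝ := (Real.sqrt (2 * π))⁻¹ * Real.exp (-w ^ 2 / 2)

/-- Standard normal cumulative distribution function. -/
noncomputable def normalCDF (w : ℝ) : ℝ := ∫ s in Set.Iic w, normalPDF s

/-- Stein's solution `h_t`. -/
noncomputable def steinSolution (t w : ℝ) : ℝ :=
  if w ≤ t then normalCDF w * (1 - normalCDF t) / normalPDF w
  else normalCDF t * (1 - normalCDF w) / normalPDF w

lemma normalPDF_pos (w : ℝ) : 0 < normalPDF w :=
  mul_pos (inv_pos.2 (Real.sqrt_pos.2 (by positivity))) (exp_pos _)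

lemma normalPDF_eq (w : ℝ) : normalPDF w = ProbabilityTheory.gaussianPDFReal 0 1 w := by
  simp [normalPDF, ProbabilityTheory.gaussianPDFReal]

lemma integrable_normalPDF : Integrable normalPDF := by
  have : normalPDF = ProbabilityTheory.gaussianPDFReal 0 1 := funext normalPDF_eq
  rw [this]; exact ProbabilityTheory.integrable_gaussianPDFReal 0 1

lemma integral_normalPDF : ∫ x, normalPDF x = 1 := by
  simp_rw [normalPDF_eq]
  exact ProbabilityTheory.integral_gaussianPDFReal_eq_one 0 one_ne_zero

lemma normalCDF_nonneg (w : ℝ) : 0 ≤ normalCDF w :=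
  setIntegral_nonneg measurableSet_Iic fun s _ => (normalPDF_pos s).le

lemma one_sub_normalCDF (w : ℝ) : 1 - normalCDF w = ∫ s in Set.Ioi w, normalPDF s := by
  have h := integral_add_compl (measurableSet_Iic (a := w)) integrable_normalPDF
    (f := normalPDF)
  rw [integral_normalPDF, Set.compl_Iic] at h
  rw [normalCDF, ← h]; ring

lemma normalCDF_le_one (w : ℝ) : normalCDF w ≤ 1 := by
  have h := one_sub_normalCDF w
  have : 0 ≤ ∫ s in Set.Ioi w, normalPDF s :=
    setIntegral_nonneg measurableSet_Ioi fun s _ => (normalPDF_pos s).le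
  linarith

lemma normalCDF_mono : Monotone normalCDF := fun _ _ hab =>
  setIntegral_mono_set integrable_normalPDF.integrableOn
    (ae_of_all _ fun s => (normalPDF_pos s).le) ((Set.Iic_subset_Iic.2 hab).eventuallyLE)

lemma normalCDF_neg (w : ℝ) : normalCDF (-w) = 1 - normalCDF w := by
  have heven : ∀ x : ℝ, normalPDF (-x) = normalPDF x := fun x => by simp [normalPDF]
  have : normalCDF (-w) = ∫ x in Set.Iic (-w), normalPDF (-x) := by
    rw [normalCDF]; congr 1; ext x; rw [heven]
  rw [this, integral_comp_neg_Iic, neg_neg, ← one_sub_normalCDF]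

lemma tail_eq (w : ℝ) :
    (∫ s in Set.Ioi w, normalPDF s)
      = normalPDF w * ∫ u in Set.Ioi (0:ℝ), Real.exp (-(w*u) - u^2/2) := by
  have h : MeasurePreserving (fun u : ℝ => u + w) volume volume :=
    measurePreserving_add_right volume w
  have e : MeasurableEmbedding (fun u : ℝ => u + w) :=
    (Homeomorph.addRight w).isClosedEmbedding.measurableEmbedding
  have key := h.setIntegral_preimage_emb e normalPDF (Set.Ioi w)
  have hpre : (fun u : ℝ => u + w) ⁻¹' Set.Ioi w = Set.Ioi 0 := by
    ext u; simp
  rw [hpre] at key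
  rw [← key, ← integral_const_mul]
  apply setIntegral_congr_fun measurableSet_Ioi
  intro u _
  simp only [normalPDF]
  have : -(u + w) ^ 2 / 2 = -w^2/2 + (-(w*u) - u^2/2) := by ring
  rw [this, exp_add]; ring

lemma integrableOn_tailFn {w : ℝ} (hw : 0 ≤ w) :
    IntegrableOn (fun u : ℝ => Real.exp (-(w*u) - u^2/2)) (Set.Ioi 0) := by
  apply Integrable.mono' ((integrable_exp_neg_mul_sq (by norm_num : (0:ℝ) < 1/2)).integrableOn)
  · exact (Continuous.aestronglyMeasurable (by continuity))
  · filter_upwards [ae_restrict_mem measurableSet_Ioi] with u hu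
    rw [Real.norm_eq_abs, abs_of_pos (exp_pos _)]
    apply Real.exp_le_exp.2
    have : (0:ℝ) < u := hu
    nlinarith

lemma tailFn_le_one {w : ℝ} (hw : 1 ≤ w) :
    (∫ u in Set.Ioi (0:ℝ), Real.exp (-(w*u) - u^2/2)) ≤ 1 := by
  have h1 : (∫ u in Set.Ioi (0:ℝ), Real.exp (-(1:ℝ)*u)) = 1 := by
    simp_rw [neg_one_mul]
    exact integral_exp_neg_Ioi_zero
  rw [← h1]
  apply setIntegral_mono_on
  · exact integrableOn_tailFn (by linarith)
  · exact exp_neg_integrableOn_Ioi 0 (by norm_num)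
  · exact measurableSet_Ioi
  · intro u hu
    apply Real.exp_le_exp.2
    have : (0:ℝ) < u := hu
    nlinarith

lemma tailFn_le_M {w : ℝ} (hw : 0 ≤ w) :
    (∫ u in Set.Ioi (0:ℝ), Real.exp (-(w*u) - u^2/2)) ≤ Real.sqrt (2*π) / 2 := by
  have h1 : (∫ u in Set.Ioi (0:ℝ), Real.exp (-(1/2:ℝ)*u^2)) = Real.sqrt (π / (1/2)) / 2 :=
    integral_gaussian_Ioi (1/2)
  have h2 : Real.sqrt (π / (1/2)) = Real.sqrt (2*π) := by norm_num [mul_comm]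
  rw [← h2, ← h1]
  apply setIntegral_mono_on
  · exact integrableOn_tailFn hw
  · exact (integrable_exp_neg_mul_sq (by norm_num)).integrableOn
  · exact measurableSet_Ioi
  · intro u hu
    apply Real.exp_le_exp.2
    have : (0:ℝ) < u := hu
    nlinarith

lemma numeric_step : (2*π - 2*Real.sqrt (2*π)) * Real.exp (1/2) ≤ π := by
  set s := Real.sqrt (2*π) with hsdef
  set x := Real.exp (1/2:ℝ) with hxdef
  have hs2 : s^2 = 2*π := Real.sq_sqrt (by positivity)
  have hspos : 0 < s := Real.sqrt_pos.2 (by positivity)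
  have hx2 : x^2 < 2.7182818286 := by
    have : x^2 = Real.exp 1 := by rw [hxdef, sq, ← Real.exp_add]; norm_num
    rw [this]; exact Real.exp_one_lt_d9
  have hx1 : (1:ℝ) ≤ x := by
    rw [hxdef]; exact Real.one_le_exp (by norm_num)
  have hxlt : x < 1.6489 := by nlinarith
  have hpi1 : π > 3.141592 := Real.pi_gt_d6
  have hpi2 : π < 3.1416 := Real.pi_lt_d6.trans (by norm_num)
  have hs25 : 2.5 < s := by nlinarith
  nlinarith

lemma key_nonneg {w : ℝ} (hw : 0 ≤ w) :
    normalCDF w * (1 - normalCDF w) ≤ normalPDF w := by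
  set R := ∫ u in Set.Ioi (0:ℝ), Real.exp (-(w*u) - u^2/2) with hRdef
  have hid : 1 - normalCDF w = normalPDF w * R := by rw [one_sub_normalCDF, tail_eq]
  have hφ := normalPDF_pos w
  have hRnn : 0 ≤ R := setIntegral_nonneg measurableSet_Ioi fun u _ => (exp_pos _).le
  have hΦnn := normalCDF_nonneg w
  have hΦ1 := normalCDF_le_one w
  rw [hid]
  rcases le_or_gt 1 w with h1 | h1
  · have hR1 : R ≤ 1 := tailFn_le_one h1
    nlinarith
  · have hΦeq : normalCDF w = 1 - normalPDF w * R := by linarith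
    have hRM : R ≤ Real.sqrt (2*π) / 2 := tailFn_le_M hw
    set s := Real.sqrt (2*π) with hsdef
    have hs2 : s^2 = 2*π := Real.sq_sqrt (by positivity)
    have hspos : 0 < s := Real.sqrt_pos.2 (by positivity)
    have hφs : normalPDF w * s = Real.exp (-w^2/2) := by
      have h' : normalPDF w * s = (s⁻¹ * s) * Real.exp (-w^2/2) := by
        simp only [normalPDF, hsdef]; ring
      rw [h', inv_mul_cancel₀ hspos.ne', one_mul]
    have hφs1 : normalPDF w * s ≤ 1 := by
      rw [hφs]; exact Real.exp_le_one_iff.2 (by nlinarith)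
    set x := Real.exp (1/2:ℝ) with hxdef
    have hxpos : 0 < x := exp_pos _
    have hge : 1 ≤ normalPDF w * s * x := by
      rw [hφs, hxdef, ← Real.exp_add]
      exact Real.one_le_exp (by nlinarith)
    have hstep : (2*π - 2*s) * x ≤ π := numeric_step
    have hpipos : (0:ℝ) < π := Real.pi_pos
    have hφπ : s - 2 ≤ normalPDF w * π := by
      nlinarith [mul_pos hspos hxpos, mul_le_mul_of_nonneg_left hge hpipos.le]
    have hkey : (1 - normalPDF w * R) * R ≤ 1 := by
      nlinarith [mul_nonneg (sub_nonneg.2 hRM)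
        (sub_nonneg.2 (show normalPDF w * (s/2 + R) ≤ 1 by nlinarith))]
    rw [hΦeq]
    nlinarith [mul_le_mul_of_nonneg_left hkey hφ.le]

lemma key (w : ℝ) : normalCDF w * (1 - normalCDF w) ≤ normalPDF w := by
  rcases le_or_gt 0 w with hw | hw
  · exact key_nonneg hw
  · have h := key_nonneg (w := -w) (by linarith)
    rw [normalCDF_neg] at h
    have heven : normalPDF (-w) = normalPDF w := by simp [normalPDF]
    rw [heven] at h
    have : normalCDF w * (1 - normalCDF w)
        = (1 - normalCDF w) * (1 - (1 - normalCDF w)) := by ring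
    rw [this]; exact h

/-- The bounded solution of Stein's equation satisfies `0 ≤ h_t(w) ≤ 1`. -/
theorem steinSolution_bounds (t w : ℝ) :
    0 ≤ steinSolution t w ∧ steinSolution t w ≤ 1 := by
  have hφ := normalPDF_pos w
  constructor
  · unfold steinSolution
    split
    · exact div_nonneg (mul_nonneg (normalCDF_nonneg _)
        (by linarith [normalCDF_le_one t])) hφ.le
    · exact div_nonneg (mul_nonneg (normalCDF_nonneg _)
        (by linarith [normalCDF_le_one w])) hφ.le
  · unfold steinSolution
    split
    next h =>
      rw [div_le_one hφ]
      calc normalCDF w * (1 - normalCDF t)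
          ≤ normalCDF w * (1 - normalCDF w) := by
            have := normalCDF_mono h
            have := normalCDF_nonneg w
            nlinarith
        _ ≤ normalPDF w := key w
    next h =>
      rw [div_le_one hφ]
      calc normalCDF t * (1 - normalCDF w)
          ≤ normalCDF w * (1 - normalCDF w) := by
            have := normalCDF_mono (le_of_lt (not_le.1 h))
            have := normalCDF_le_one w
            nlinarith
        _ ≤ normalPDF w := key w
end

section
/- Let f(u,k) = Γ(m-k+2,k) evaluated via the closed form: Γ(m-k+2,k) = (b/(b-1))^{m-k}·(1 - (m-k)/(b-1)), i.e., substituting u = m-k+2 into Γ(u,k) = 1 + (1-b)^{-u}[(-b)^{m-k}C(u-1,m-k) - Σ_{j=0}^{m-k}C(u,j)(-b)^j] yields (b/(b-1))^{m-k}(1 - (m-k)/(b-1)). -/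
open Finset

private lemma gain_key (x : ℝ) (hx : x ≠ 0) (n : ℕ) :
    1 + (x ^ (n + 2))⁻¹ *
        (((n : ℝ) + 1) * (x + 1) ^ n - x ^ (n + 2) - ((n : ℝ) + 2) * (x + 1) ^ (n + 1)
          + (x + 1) ^ (n + 2))
      = ((x + 1) / x) ^ n * (1 - (n : ℝ) / x) := by
  rw [div_pow]
  field_simp
  ring

/-- Closed form for the gain coefficient at `u = m - k + 2`:
`1 + (1-b)^{-(m-k+2)} [(-b)^{m-k} C(m-k+1, m-k) - Σ_{j=0}^{m-k} C(m-k+2, j)(-b)^j]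
  = (b/(b-1))^{m-k} (1 - (m-k)/(b-1))`. -/
theorem gainCoeff_closed_form (b m k : ℕ) (hb : 2 ≤ b) (hk : k ≤ m) :
    1 + ((1 : ℝ) - b) ^ (-((m - k + 2 : ℕ) : ℤ)) *
        ((-(b : ℝ)) ^ (m - k) * ((m - k + 1).choose (m - k) : ℝ)
          - ∑ j ∈ range (m - k + 1), (((m - k + 2).choose j : ℝ) * (-(b : ℝ)) ^ j))
      = ((b : ℝ) / ((b : ℝ) - 1)) ^ (m - k) * (1 - ((m - k : ℕ) : ℝ) / ((b : ℝ) - 1)) := by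
  set n := m - k with hn
  have hb2 : (2 : ℝ) ≤ (b : ℝ) := by exact_mod_cast hb
  have hx : (b : ℝ) - 1 ≠ 0 := by linarith
  -- binomial theorem
  have hsum : ∑ j ∈ range (n + 3), (((n + 2).choose j : ℝ) * (-(b : ℝ)) ^ j)
      = ((1 : ℝ) - b) ^ (n + 2) := by
    rw [show (1 : ℝ) - b = -(b : ℝ) + 1 by ring, add_pow]
    simp [mul_comm]
  rw [sum_range_succ, sum_range_succ] at hsum
  have hS : ∑ j ∈ range (n + 1), (((n + 2).choose j : ℝ) * (-(b : ℝ)) ^ j)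
      = ((1 : ℝ) - b) ^ (n + 2) - ((n : ℝ) + 2) * (-(b : ℝ)) ^ (n + 1)
        - (-(b : ℝ)) ^ (n + 2) := by
    have h1 : ((n + 2).choose (n + 1) : ℝ) = (n : ℝ) + 2 := by
      rw [Nat.choose_succ_self_right]; push_cast; ring
    have h2 : ((n + 2).choose (n + 2) : ℝ) = 1 := by simp
    rw [h1, h2] at hsum
    linarith [hsum]
  have hch : ((n + 1).choose n : ℝ) = (n : ℝ) + 1 := by
    rw [Nat.choose_succ_self_right]; push_cast; ring
  rw [hS, hch, zpow_neg, zpow_natCast]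
  have h1b : ((1 : ℝ) - b) ^ (n + 2) = (-1 : ℝ) ^ n * ((b : ℝ) - 1) ^ (n + 2) := by
    rw [show (1 : ℝ) - b = -((b : ℝ) - 1) by ring, neg_pow]
    ring
  have hA : (-(b : ℝ)) ^ n * ((n : ℝ) + 1)
      - (((1 : ℝ) - b) ^ (n + 2) - ((n : ℝ) + 2) * (-(b : ℝ)) ^ (n + 1)
        - (-(b : ℝ)) ^ (n + 2))
      = (-1 : ℝ) ^ n * (((n : ℝ) + 1) * (((b : ℝ) - 1) + 1) ^ n - ((b : ℝ) - 1) ^ (n + 2)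
        - ((n : ℝ) + 2) * (((b : ℝ) - 1) + 1) ^ (n + 1) + (((b : ℝ) - 1) + 1) ^ (n + 2)) := by
    rw [h1b, neg_pow ((b : ℝ)) n, neg_pow ((b : ℝ)) (n + 1), neg_pow ((b : ℝ)) (n + 2)]
    ring
  have hee : ((-1 : ℝ) ^ n)⁻¹ = (-1 : ℝ) ^ n := by
    rw [← inv_pow]; norm_num
  have hmul : (-1 : ℝ) ^ n * (-1 : ℝ) ^ n = 1 := by
    rw [← mul_pow]; norm_num
  rw [hA, h1b, mul_inv, hee]
  have key := gain_key ((b : ℝ) - 1) hx n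
  calc 1 + (-1 : ℝ) ^ n * (((b : ℝ) - 1) ^ (n + 2))⁻¹ *
        ((-1 : ℝ) ^ n * (((n : ℝ) + 1) * (((b : ℝ) - 1) + 1) ^ n - ((b : ℝ) - 1) ^ (n + 2)
          - ((n : ℝ) + 2) * (((b : ℝ) - 1) + 1) ^ (n + 1) + (((b : ℝ) - 1) + 1) ^ (n + 2)))
      = 1 + ((-1 : ℝ) ^ n * (-1 : ℝ) ^ n) * ((((b : ℝ) - 1) ^ (n + 2))⁻¹ *
          (((n : ℝ) + 1) * (((b : ℝ) - 1) + 1) ^ n - ((b : ℝ) - 1) ^ (n + 2)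
            - ((n : ℝ) + 2) * (((b : ℝ) - 1) + 1) ^ (n + 1)
            + (((b : ℝ) - 1) + 1) ^ (n + 2))) := by ring
    _ = 1 + (((b : ℝ) - 1) ^ (n + 2))⁻¹ *
          (((n : ℝ) + 1) * (((b : ℝ) - 1) + 1) ^ n - ((b : ℝ) - 1) ^ (n + 2)
            - ((n : ℝ) + 2) * (((b : ℝ) - 1) + 1) ^ (n + 1)
            + (((b : ℝ) - 1) + 1) ^ (n + 2)) := by rw [hmul, one_mul]
    _ = ((((b : ℝ) - 1) + 1) / ((b : ℝ) - 1)) ^ n * (1 - (n : ℝ) / ((b : ℝ) - 1)) := key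
    _ = ((b : ℝ) / ((b : ℝ) - 1)) ^ n * (1 - (n : ℝ) / ((b : ℝ) - 1)) := by norm_num
end

section
/- For positive integers u and nonnegative integers m with m ≥ u, and real b > 1: Σ_{r=m-u+1}^{∞} b^{-2r/d}·C(r - a·u + u - 1, u - 1) ≥ (b^{-2(m-u)/d}/(u-1)!)·(m - a·u - u + 1)^{u-1}·Σ_{l=1}^{∞} b^{-2l/d}, whenever m - a·u - u + 1 ≥ 1, where d ≥ 1 is an integer and a ≥ 0 an integer. -/
open Real

set_option maxHeartbeats 1000000 in
/-- Tail sum lower bound: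
`Σ_{r=m-u+1}^{∞} b^{-2r/d} C(r - au + u - 1, u-1)
  ≥ (b^{-2(m-u)/d}/(u-1)!) (m - au - u + 1)^{u-1} Σ_{l=1}^{∞} b^{-2l/d}`. -/
theorem binomial_tail_sum_lower_bound
    (d u a m : ℕ) (hd : 1 ≤ d) (hu : 1 ≤ u) (hum : u ≤ m)
    (b : ℝ) (hb : 1 < b)
    (hfeas : (1 : ℤ) ≤ (m : ℤ) - a * u - u + 1) :
    (b ^ (-(2 * ((m : ℝ) - u)) / d) / ((u - 1).factorial : ℝ))
        * ((m : ℝ) - a * u - u + 1) ^ (u - 1)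
        * ∑' l : ℕ, b ^ (-(2 * ((l : ℝ) + 1)) / d)
      ≤ ∑' l : ℕ,
          b ^ (-(2 * ((m - u + 1 + l : ℕ) : ℝ)) / d)
            * (((m - u + 1 + l) - a * u + u - 1).choose (u - 1) : ℝ) := by
  have hb0 : (0:ℝ) < b := lt_trans one_pos hb
  have hd0 : (0:ℝ) < d := by exact_mod_cast hd
  set q : ℝ := b ^ (-(2:ℝ)/d) with hq
  have hq0 : 0 < q := Real.rpow_pos_of_pos hb0 _
  have hq1 : q < 1 := by
    apply Real.rpow_lt_one_of_one_lt_of_neg hb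
    rw [div_neg_iff]; right; constructor <;> [norm_num; exact hd0]
  have key : ∀ x : ℝ, b ^ (-(2 * x) / d) = q ^ x := by
    intro x
    rw [hq, ← Real.rpow_mul hb0.le]
    congr 1; ring
  have keyn : ∀ x : ℕ, b ^ (-(2 * (x:ℝ)) / d) = q ^ x := by
    intro x
    rw [key, Real.rpow_natCast]
  have hau : a * u + u ≤ m := by
    have hcast : ((a*u : ℕ) : ℤ) = (a:ℤ)*(u:ℤ) := by push_cast; ring
    omega
  set N : ℕ := m - a*u - u + 1 with hN
  have hNZ : ((m : ℤ) - a*u - u + 1) = (N : ℤ) := by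
    have hcast : ((a*u : ℕ) : ℤ) = (a:ℤ)*(u:ℤ) := by push_cast; ring
    omega
  have hNcast : (m:ℝ) - a*u - u + 1 = (N:ℝ) := by exact_mod_cast hNZ
  have hmu : (m:ℝ) - u = ((m - u : ℕ) : ℝ) := by
    rw [Nat.cast_sub hum]
  -- pointwise bound
  have hpt : ∀ l : ℕ,
      (q ^ (m-u) / ((u - 1).factorial : ℝ)) * (N:ℝ) ^ (u - 1) * q ^ (l+1)
        ≤ q ^ (m - u + 1 + l) * (((m - u + 1 + l) - a * u + u - 1).choose (u - 1) : ℝ) := by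
    intro l
    have hpow : q ^ (m-u) * q ^ (l+1) = q ^ (m - u + 1 + l) := by
      rw [← pow_add]; ring_nf
    set n : ℕ := (m - u + 1 + l) - a * u + u - 1 with hn
    have h1 : N ≤ n + 1 - (u-1) := by omega
    have h2 : ((n + 1 - (u-1) : ℕ) ^ (u-1) : ℝ) / ((u-1).factorial : ℝ) ≤ n.choose (u-1) :=
      Nat.pow_le_choose (u-1) n
    have h3 : ((N:ℝ)) ^ (u-1) / ((u-1).factorial : ℝ) ≤ (n.choose (u-1) : ℝ) := by
      refine le_trans ?_ h2
      have h1' : ((N:ℝ)) ≤ ((n + 1 - (u-1) : ℕ) : ℝ) := by exact_mod_cast h1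
      have hN0 : (0:ℝ) ≤ (N:ℝ) := by positivity
      gcongr
    calc (q ^ (m-u) / ((u - 1).factorial : ℝ)) * (N:ℝ) ^ (u - 1) * q ^ (l+1)
        = (q ^ (m-u) * q ^ (l+1)) * ((N:ℝ) ^ (u - 1) / ((u-1).factorial : ℝ)) := by ring
      _ = q ^ (m - u + 1 + l) * ((N:ℝ) ^ (u - 1) / ((u-1).factorial : ℝ)) := by rw [hpow]
      _ ≤ q ^ (m - u + 1 + l) * (n.choose (u-1) : ℝ) := by
          exact mul_le_mul_of_nonneg_left h3 (by positivity)
  -- summability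
  have hs1 : Summable (fun l : ℕ => q ^ (l+1)) := by
    simpa [pow_succ] using (summable_geometric_of_lt_one hq0.le hq1).mul_right q
  have hsbig : Summable (fun l : ℕ => (((l + m : ℕ)):ℝ) ^ (u-1) * q ^ (l + m)) := by
    have := summable_pow_mul_geometric_of_norm_lt_one (R := ℝ) (u-1)
      (r := q) (by rwa [Real.norm_of_nonneg hq0.le])
    exact (summable_nat_add_iff m).2 this
  have hs2 : Summable (fun l : ℕ =>
      q ^ (m - u + 1 + l) * (((m - u + 1 + l) - a * u + u - 1).choose (u - 1) : ℝ)) := by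
    refine Summable.of_nonneg_of_le
      (f := fun l => (q ^ (m-u+1) / q ^ m) * ((((l + m : ℕ)):ℝ) ^ (u-1) * q ^ (l + m)))
      (fun l => by positivity) (fun l => ?_) (hsbig.mul_left _)
    ·
      have hc : (((m - u + 1 + l) - a * u + u - 1).choose (u - 1) : ℝ)
          ≤ (((l + m : ℕ)):ℝ) ^ (u-1) := by
        have := Nat.choose_le_pow ((m - u + 1 + l) - a * u + u - 1) (u-1)
        have h2 : ((m - u + 1 + l) - a * u + u - 1) ^ (u-1) ≤ (l + m) ^ (u-1) :=
          Nat.pow_le_pow_left (by omega) _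
        exact_mod_cast le_trans this h2
      have hqpow : q ^ (m - u + 1 + l) = (q ^ (m-u+1) / q ^ m) * q ^ (l + m) := by
        rw [pow_add q l m, pow_add q (m-u+1) l]
        field_simp
      rw [hqpow]
      calc (q ^ (m-u+1) / q ^ m) * q ^ (l + m) * (((m - u + 1 + l) - a * u + u - 1).choose (u - 1) : ℝ)
          ≤ (q ^ (m-u+1) / q ^ m) * q ^ (l + m) * ((((l + m : ℕ)):ℝ) ^ (u-1)) := by
            exact mul_le_mul_of_nonneg_left hc (by positivity)
        _ = (q ^ (m-u+1) / q ^ m) * ((((l + m : ℕ)):ℝ) ^ (u-1) * q ^ (l + m)) := by ring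
  -- main computation
  have hL : ∀ l : ℕ, b ^ (-(2 * ((l:ℝ) + 1)) / d) = q ^ (l+1) := by
    intro l
    have := keyn (l+1)
    push_cast at this
    exact this
  have hR : ∀ l : ℕ, b ^ (-(2 * ((m - u + 1 + l : ℕ) : ℝ)) / d)
      * (((m - u + 1 + l) - a * u + u - 1).choose (u - 1) : ℝ)
      = q ^ (m - u + 1 + l) * (((m - u + 1 + l) - a * u + u - 1).choose (u - 1) : ℝ) := by
    intro l; rw [keyn]
  rw [hmu, keyn, hNcast, tsum_congr hL, tsum_congr hR, ← tsum_mul_left]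
  exact Summable.tsum_le_tsum hpt ((hs1.mul_left _)) hs2
end
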